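/- There exists a natural number N such that for every even n ≥ N, the number of pairs (α, β) ∈ F_n × F_n such that α and β share a common orbit is at least (1/3)·|F_n|²; i.e., two independent uniformly random elements of F_n share a common orbit with probability at least 1/3. -/

import Mathlib

set_option maxHeartbeats 1000000

open scoped Classical

open Finset Equiv

/-- The set of fixed-point-free involutions of `{1,…,n}` (modeled on `Fin n`). -/
noncomputable def fpf (n : ℕ) : Finset (Equiv.Perm (Fin n)) :=
  Finset.univ.filter (fun σ => σ * σ = 1 ∧ ∀ i, σ i ≠ i)

lemma mem_fpf {n : ℕ} {σ : Equiv.Perm (Fin n)} :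
    σ ∈ fpf n ↔ σ * σ = 1 ∧ ∀ i, σ i ≠ i := by
  simp [fpf]

lemma fpf_apply_apply {n : ℕ} {σ : Equiv.Perm (Fin n)} (h : σ ∈ fpf n) (i : Fin n) :
    σ (σ i) = i := by
  have := (mem_fpf.1 h).1
  have : (σ * σ) i = (1 : Equiv.Perm (Fin n)) i := by rw [this]
  simpa using this

lemma conj_mem_fpf {n : ℕ} {σ τ : Equiv.Perm (Fin n)} (h : σ ∈ fpf n) (hτ : τ * τ = 1) :
    τ * σ * τ ∈ fpf n := by
  obtain ⟨h1, h2⟩ := mem_fpf.1 h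
  have hτa : ∀ x, τ (τ x) = x := by
    intro x
    have : (τ * τ) x = (1 : Equiv.Perm (Fin n)) x := by rw [hτ]
    simpa using this
  refine mem_fpf.2 ⟨?_, ?_⟩
  · ext x
    simp only [Equiv.Perm.mul_apply, Equiv.Perm.one_apply]
    rw [hτa]
    have : σ (σ (τ x)) = τ x := by
      have : (σ * σ) (τ x) = (1 : Equiv.Perm (Fin n)) (τ x) := by rw [h1]
      simpa using this
    rw [this, hτa]
  · intro i hi
    simp only [Equiv.Perm.mul_apply] at hi
    have : σ (τ i) = τ i := by
      have := congrArg τ hi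
      rwa [hτa] at this
    exact h2 _ this

/-- Conjugation bijection between filtered subsets of `fpf n`. -/
lemma card_filter_conj {n : ℕ} (τ : Equiv.Perm (Fin n)) (hτ : τ * τ = 1)
    (P Q : Equiv.Perm (Fin n) → Prop) [DecidablePred P] [DecidablePred Q]
    (h : ∀ σ ∈ fpf n, P σ → Q (τ * σ * τ))
    (h' : ∀ σ ∈ fpf n, Q σ → P (τ * σ * τ)) :
    ((fpf n).filter P).card = ((fpf n).filter Q).card := by
  refine Finset.card_bij' (fun σ _ => τ * σ * τ) (fun σ _ => τ * σ * τ) ?_ ?_ ?_ ?_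
  · intro σ hσ
    rw [Finset.mem_filter] at hσ ⊢
    exact ⟨conj_mem_fpf hσ.1 hτ, h σ hσ.1 hσ.2⟩
  · intro σ hσ
    rw [Finset.mem_filter] at hσ ⊢
    exact ⟨conj_mem_fpf hσ.1 hτ, h' σ hσ.1 hσ.2⟩
  · intro σ _
    show τ * (τ * σ * τ) * τ = σ
    calc τ * (τ * σ * τ) * τ = (τ * τ) * σ * (τ * τ) := by group
    _ = σ := by rw [hτ]; group
  · intro σ _
    show τ * (τ * σ * τ) * τ = σ
    calc τ * (τ * σ * τ) * τ = (τ * τ) * σ * (τ * τ) := by group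
    _ = σ := by rw [hτ]; group

lemma swap_conj_apply {n : ℕ} (σ : Equiv.Perm (Fin n)) (a b x : Fin n)
    (hxa : x ≠ a) (hxb : x ≠ b) :
    (Equiv.swap a b * σ * Equiv.swap a b) x = Equiv.swap a b (σ x) := by
  simp [Equiv.Perm.mul_apply, Equiv.swap_apply_of_ne_of_ne hxa hxb]

/-- All fibers `α i = j` (for `j ≠ i`) have the same cardinality. -/
lemma Nc_const {n : ℕ} (i j j' : Fin n) (hj : j ≠ i) (hj' : j' ≠ i) :
    ((fpf n).filter fun α => α i = j).card = ((fpf n).filter fun α => α i = j').card := by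
  rcases eq_or_ne j j' with rfl | hjj
  · rfl
  · have hτ : Equiv.swap j j' * Equiv.swap j j' = 1 := Equiv.swap_mul_self j j'
    refine card_filter_conj (Equiv.swap j j') hτ _ _ ?_ ?_
    · intro σ _ hσ
      show (Equiv.swap j j' * σ * Equiv.swap j j') i = j'
      rw [swap_conj_apply σ j j' i (Ne.symm hj) (Ne.symm hj'), hσ, Equiv.swap_apply_left]
    · intro σ _ hσ
      show (Equiv.swap j j' * σ * Equiv.swap j j') i = j
      rw [swap_conj_apply σ j j' i (Ne.symm hj) (Ne.symm hj'), hσ, Equiv.swap_apply_right]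

lemma L1 {n : ℕ} (i j : Fin n) (hj : j ≠ i) :
    (n - 1) * ((fpf n).filter fun α => α i = j).card = (fpf n).card := by
  have hfib : (fpf n).card = ∑ b ∈ Finset.univ, ((fpf n).filter fun α => α i = b).card :=
    Finset.card_eq_sum_card_fiberwise (fun x _ => Finset.mem_univ _)
  have hzero : ((fpf n).filter fun α => α i = i).card = 0 := by
    rw [Finset.card_eq_zero, Finset.filter_eq_empty_iff]
    intro σ hσ
    exact (mem_fpf.1 hσ).2 i
  rw [hfib, ← Finset.sum_erase _ (by simpa using hzero)]
  rw [Finset.sum_congr rfl (fun b hb => Nc_const i b j (Finset.ne_of_mem_erase hb) hj)]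
  rw [Finset.sum_const, Finset.card_erase_of_mem (Finset.mem_univ i), Finset.card_univ,
    Fintype.card_fin, smul_eq_mul]

lemma Mc_const {n : ℕ} (i j k l l' : Fin n)
    (h1 : l ∉ ({i, j, k} : Finset (Fin n))) (h2 : l' ∉ ({i, j, k} : Finset (Fin n))) :
    ((fpf n).filter fun α => α i = j ∧ α k = l).card
      = ((fpf n).filter fun α => α i = j ∧ α k = l').card := by
  simp only [Finset.mem_insert, Finset.mem_singleton, not_or] at h1 h2
  obtain ⟨hli, hlj, hlk⟩ := h1
  obtain ⟨hl'i, hl'j, hl'k⟩ := h2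
  rcases eq_or_ne l l' with rfl | hll
  · rfl
  have hτ : Equiv.swap l l' * Equiv.swap l l' = 1 := Equiv.swap_mul_self l l'
  refine card_filter_conj (Equiv.swap l l') hτ _ _ ?_ ?_
  · rintro σ _ ⟨hσ1, hσ2⟩
    constructor
    · show (Equiv.swap l l' * σ * Equiv.swap l l') i = j
      rw [swap_conj_apply σ l l' i (Ne.symm hli) (Ne.symm hl'i), hσ1,
        Equiv.swap_apply_of_ne_of_ne (Ne.symm hlj) (Ne.symm hl'j)]
    · show (Equiv.swap l l' * σ * Equiv.swap l l') k = l'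
      rw [swap_conj_apply σ l l' k (Ne.symm hlk) (Ne.symm hl'k), hσ2,
        Equiv.swap_apply_left]
  · rintro σ _ ⟨hσ1, hσ2⟩
    constructor
    · show (Equiv.swap l l' * σ * Equiv.swap l l') i = j
      rw [swap_conj_apply σ l l' i (Ne.symm hli) (Ne.symm hl'i), hσ1,
        Equiv.swap_apply_of_ne_of_ne (Ne.symm hlj) (Ne.symm hl'j)]
    · show (Equiv.swap l l' * σ * Equiv.swap l l') k = l
      rw [swap_conj_apply σ l l' k (Ne.symm hlk) (Ne.symm hl'k), hσ2,
        Equiv.swap_apply_right]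

lemma L2 {n : ℕ} (i j k l : Fin n) (hji : j ≠ i) (hki : k ≠ i) (hkj : k ≠ j)
    (hli : l ≠ i) (hlj : l ≠ j) (hlk : l ≠ k) :
    (n - 3) * ((fpf n).filter fun α => α i = j ∧ α k = l).card
      = ((fpf n).filter fun α => α i = j).card := by
  classical
  set g : Fin n → ℕ := fun b => ((fpf n).filter fun α => α i = j ∧ α k = b).card with hg
  have hfib : ((fpf n).filter fun α => α i = j).card = ∑ b ∈ Finset.univ, g b := by
    rw [Finset.card_eq_sum_card_fiberwise (f := fun α => α k)
      (t := Finset.univ) (fun x _ => Finset.mem_univ _)]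
    refine Finset.sum_congr rfl fun b _ => ?_
    rw [Finset.filter_filter]
  have hzero : ∀ b ∈ ({i, j, k} : Finset (Fin n)), g b = 0 := by
    intro b hb
    rw [hg]
    simp only [Finset.card_eq_zero, Finset.filter_eq_empty_iff]
    rintro σ hσ ⟨hσ1, hσ2⟩
    simp only [Finset.mem_insert, Finset.mem_singleton] at hb
    rcases hb with rfl | rfl | rfl
    · have : k = j := by rw [← fpf_apply_apply hσ k, hσ2, hσ1]
      exact hkj this
    · have h3 : σ b = i := by rw [← hσ1, fpf_apply_apply hσ]
      have : k = i := by rw [← fpf_apply_apply hσ k, hσ2, h3]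
      exact hki this
    · exact (mem_fpf.1 hσ).2 b hσ2
  have hsub : ∑ b ∈ Finset.univ \ ({i, j, k} : Finset (Fin n)), g b
      = ∑ b ∈ Finset.univ, g b := by
    refine Finset.sum_subset (Finset.subset_univ _) fun x _ hx => ?_
    refine hzero x ?_
    by_contra hmem
    exact hx (Finset.mem_sdiff.2 ⟨Finset.mem_univ x, hmem⟩)
  have hl : l ∈ Finset.univ \ ({i, j, k} : Finset (Fin n)) := by
    simp [hli, hlj, hlk]
  have hconst : ∀ b ∈ Finset.univ \ ({i, j, k} : Finset (Fin n)), g b = g l := by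
    intro b hb
    exact Mc_const i j k b l (Finset.mem_sdiff.1 hb).2 (Finset.mem_sdiff.1 hl).2
  have hcard : (Finset.univ \ ({i, j, k} : Finset (Fin n))).card = n - 3 := by
    rw [Finset.card_sdiff_of_subset (Finset.subset_univ _), Finset.card_univ, Fintype.card_fin]
    congr 1
    rw [Finset.card_insert_of_notMem (by simp [Ne.symm hji, Ne.symm hki]),
      Finset.card_insert_of_notMem (by simp [Ne.symm hkj]), Finset.card_singleton]
  rw [hfib, ← hsub, Finset.sum_congr rfl hconst, Finset.sum_const, hcard, smul_eq_mul]

lemma card_E {n : ℕ} :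
    2 * ((Finset.univ : Finset (Fin n × Fin n)).filter fun q => q.1 < q.2).card + n = n * n := by
  classical
  have hdiag : ((Finset.univ : Finset (Fin n × Fin n)).filter fun q => q.1 = q.2).card = n := by
    have : ((Finset.univ : Finset (Fin n × Fin n)).filter fun q => q.1 = q.2)
        = (Finset.univ : Finset (Fin n)).image (fun i => (i, i)) := by
      ext q
      simp only [Finset.mem_filter, Finset.mem_univ, true_and, Finset.mem_image]
      constructor
      · intro h; exact ⟨q.1, Prod.ext rfl h⟩
      · rintro ⟨i, _, rfl⟩; rfl
    rw [this, Finset.card_image_of_injective _ (fun a b h => congrArg Prod.fst h),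
      Finset.card_univ, Fintype.card_fin]
  have h1 : ((Finset.univ : Finset (Fin n × Fin n)).filter fun q => q.1 = q.2).card
      + ((Finset.univ : Finset (Fin n × Fin n)).filter fun q => q.1 ≠ q.2).card = n * n := by
    rw [Finset.card_filter_add_card_filter_not]
    simp [Finset.card_univ]
  have h2 : ((Finset.univ : Finset (Fin n × Fin n)).filter fun q => q.1 ≠ q.2)
      = ((Finset.univ : Finset (Fin n × Fin n)).filter fun q => q.1 < q.2)
        ∪ ((Finset.univ : Finset (Fin n × Fin n)).filter fun q => q.2 < q.1) := by
    rw [← Finset.filter_or]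
    exact Finset.filter_congr fun q _ => by
      constructor
      · intro h; exact lt_or_gt_of_ne h
      · rintro (h | h); exacts [ne_of_lt h, ne_of_gt h]
  have hdisj : Disjoint ((Finset.univ : Finset (Fin n × Fin n)).filter fun q => q.1 < q.2)
      ((Finset.univ : Finset (Fin n × Fin n)).filter fun q => q.2 < q.1) := by
    rw [Finset.disjoint_left]
    intro q hq hq'
    simp only [Finset.mem_filter] at hq hq'
    exact absurd hq'.2 (not_lt_of_gt hq.2)
  have hswap : ((Finset.univ : Finset (Fin n × Fin n)).filter fun q => q.2 < q.1).card
      = ((Finset.univ : Finset (Fin n × Fin n)).filter fun q => q.1 < q.2).card := by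
    refine Finset.card_bij (fun q _ => q.swap) ?_ ?_ ?_
    · intro q hq; simp only [Finset.mem_filter, Finset.mem_univ, true_and] at hq ⊢; exact hq
    · intro a _ b _ h; exact Prod.swap_injective h
    · intro q hq
      refine ⟨q.swap, ?_, by simp⟩
      simp only [Finset.mem_filter, Finset.mem_univ, true_and] at hq ⊢; exact hq
  rw [← h1, hdiag, h2, Finset.card_union_of_disjoint hdisj, hswap]
  ring

lemma L3 {n : ℕ} {q q' : Fin n × Fin n} (hq : q.1 < q.2) (hq' : q'.1 < q'.2)
    {σ : Equiv.Perm (Fin n)} (hσ : σ ∈ fpf n) (h1 : σ q.1 = q.2) (h2 : σ q'.1 = q'.2)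
    (hne : q ≠ q') :
    q'.1 ≠ q.1 ∧ q'.1 ≠ q.2 ∧ q'.2 ≠ q.1 ∧ q'.2 ≠ q.2 := by
  have e1 : σ q.2 = q.1 := by rw [← h1, fpf_apply_apply hσ]
  have e2 : σ q'.2 = q'.1 := by rw [← h2, fpf_apply_apply hσ]
  refine ⟨?_, ?_, ?_, ?_⟩
  · rintro h
    exact hne (Prod.ext h.symm (by rw [← h1, ← h2, h]))
  · rintro h
    have hc : q'.2 = q.1 := by rw [← h2, h, e1]
    exact absurd (lt_trans (lt_of_lt_of_eq hq h.symm) (lt_of_lt_of_eq hq' hc)) (lt_irrefl _)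
  · rintro h
    have hc : q.2 = q'.1 := by rw [← h1, ← h, e2]
    exact absurd (lt_trans (lt_of_lt_of_eq hq' h) (lt_of_lt_of_eq hq hc)) (lt_irrefl _)
  · rintro h
    have hc : q'.1 = q.1 := by rw [← e2, h, e1]
    exact hne (Prod.ext hc.symm h.symm)

lemma L5 {n : ℕ} {q q' : Fin n × Fin n} (hq : q.1 < q.2) (hq' : q'.1 < q'.2) (hne : q ≠ q') :
    (n - 1) * ((n - 3) * ((fpf n).filter fun α => α q.1 = q.2 ∧ α q'.1 = q'.2).card)
      ≤ (fpf n).card := by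
  by_cases hE : ((fpf n).filter fun α => α q.1 = q.2 ∧ α q'.1 = q'.2).Nonempty
  · obtain ⟨σ, hσ⟩ := hE
    rw [Finset.mem_filter] at hσ
    obtain ⟨hσf, hσ1, hσ2⟩ := hσ
    obtain ⟨d1, d2, d3, d4⟩ := L3 hq hq' hσf hσ1 hσ2 hne
    rw [L2 q.1 q.2 q'.1 q'.2 hq.ne' d1 d2 d3 d4 hq'.ne', L1 q.1 q.2 hq.ne']
  · rw [Finset.not_nonempty_iff_eq_empty] at hE
    rw [hE]
    simp

/-- There exists `N` such that for every even `n ≥ N`, the number of pairs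
`(α, β) ∈ F_n × F_n` sharing a common orbit is at least `(1/3)·|F_n|²`. -/
theorem exists_N_prob_sharing_orbit_ge_third :
    ∃ N : ℕ, ∀ n : ℕ, Even n → N ≤ n →
      (1 / 3 : ℝ) * ((fpf n).card : ℝ) ^ 2 ≤
        ((((fpf n) ×ˢ (fpf n)).filter (fun p => ∃ i, p.1 i = p.2 i)).card : ℝ) := by
  classical
  use 14
  intro n _hEven hn
  set F := fpf n with hF
  set P := F ×ˢ F with hP
  set E := ((Finset.univ : Finset (Fin n × Fin n)).filter fun q => q.1 < q.2) with hEdef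
  set X : Equiv.Perm (Fin n) × Equiv.Perm (Fin n) → ℕ :=
    fun p => (E.filter fun q => p.1 q.1 = q.2 ∧ p.2 q.1 = q.2).card with hX
  set N : Fin n × Fin n → ℕ := fun q => (F.filter fun α => α q.1 = q.2).card with hN
  set M : Fin n × Fin n → Fin n × Fin n → ℕ :=
    fun q q' => (F.filter fun α => α q.1 = q.2 ∧ α q'.1 = q'.2).card with hM
  -- Step A : the shared-orbit condition is `1 ≤ X p`
  have stepA : (P.filter fun p => ∃ i, p.1 i = p.2 i) = P.filter fun p => 1 ≤ X p := by
    refine Finset.filter_congr fun p hp => ?_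
    rw [hP, Finset.mem_product] at hp
    constructor
    · rintro ⟨i, hi⟩
      have hne : p.1 i ≠ i := (mem_fpf.1 hp.1).2 i
      refine Finset.card_pos.2 ?_
      rcases lt_or_gt_of_ne hne with hlt | hgt
      · exact ⟨(p.1 i, i), Finset.mem_filter.2 ⟨Finset.mem_filter.2 ⟨Finset.mem_univ _, hlt⟩,
          fpf_apply_apply hp.1 i, by rw [hi, fpf_apply_apply hp.2]⟩⟩
      · exact ⟨(i, p.1 i), Finset.mem_filter.2 ⟨Finset.mem_filter.2 ⟨Finset.mem_univ _, hgt⟩,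
          rfl, hi.symm⟩⟩
    · intro h
      obtain ⟨q, hq⟩ := Finset.card_pos.1 h
      rw [Finset.mem_filter] at hq
      exact ⟨q.1, hq.2.1.trans hq.2.2.symm⟩
  -- Step B : pointwise Bonferroni bound, summed
  have stepB : ∑ p ∈ P, (3 * (X p : ℤ) - (X p : ℤ) ^ 2)
      ≤ 2 * ((P.filter fun p => 1 ≤ X p).card : ℤ) := by
    have hpt : ∀ p ∈ P, 3 * (X p : ℤ) - (X p : ℤ) ^ 2
        ≤ (if 1 ≤ X p then (2 : ℤ) else 0) := by
      intro p _
      by_cases h : 1 ≤ X p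
      · simp only [h, if_true]
        have h1 : (1 : ℤ) ≤ (X p : ℤ) := by exact_mod_cast h
        have h2 : (X p : ℤ) = 1 ∨ (2 : ℤ) ≤ (X p : ℤ) := by
          rcases (by omega : X p = 1 ∨ 2 ≤ X p) with h' | h'
          · left; exact_mod_cast h'
          · right; exact_mod_cast h'
        rcases h2 with h2 | h2
        · rw [h2]; norm_num
        · nlinarith
      · simp only [h, if_false]
        have h0 : X p = 0 := by omega
        rw [h0]
        norm_num
    calc ∑ p ∈ P, (3 * (X p : ℤ) - (X p : ℤ) ^ 2)
        ≤ ∑ p ∈ P, (if 1 ≤ X p then (2 : ℤ) else 0) := Finset.sum_le_sum hpt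
      _ = 2 * ((P.filter fun p => 1 ≤ X p).card : ℤ) := by
          rw [← Finset.sum_boole, Finset.mul_sum]
          refine Finset.sum_congr rfl fun p _ => ?_
          by_cases h : 1 ≤ X p <;> simp [h]
  -- Step C : first moment
  have stepC : ∑ p ∈ P, X p = ∑ q ∈ E, N q ^ 2 := by
    have h1 : ∀ p, X p = ∑ q ∈ E, if p.1 q.1 = q.2 ∧ p.2 q.1 = q.2 then 1 else 0 :=
      fun p => Finset.card_filter _ _
    rw [Finset.sum_congr rfl fun p _ => h1 p, Finset.sum_comm]
    refine Finset.sum_congr rfl fun q _ => ?_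
    rw [← Finset.card_filter]
    have hsplit : (P.filter fun i => i.1 q.1 = q.2 ∧ i.2 q.1 = q.2)
        = (F.filter fun α => α q.1 = q.2) ×ˢ (F.filter fun α => α q.1 = q.2) := by
      ext x
      simp only [Finset.mem_filter, Finset.mem_product, hP]
      tauto
    rw [hsplit, Finset.card_product, sq]
  -- Step D : second moment
  have stepD : ∑ p ∈ P, X p ^ 2 = ∑ q ∈ E, ∑ q' ∈ E, M q q' ^ 2 := by
    have h1 : ∀ p, X p ^ 2 = ∑ q ∈ E, ∑ q' ∈ E,
        if (p.1 q.1 = q.2 ∧ p.1 q'.1 = q'.2) ∧ (p.2 q.1 = q.2 ∧ p.2 q'.1 = q'.2)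
          then 1 else 0 := by
      intro p
      have hxp : X p = ∑ q ∈ E, if p.1 q.1 = q.2 ∧ p.2 q.1 = q.2 then 1 else 0 :=
        Finset.card_filter _ _
      rw [sq, hxp, Finset.sum_mul_sum]
      refine Finset.sum_congr rfl fun q _ => Finset.sum_congr rfl fun q' _ => ?_
      have hiff : ((p.1 q.1 = q.2 ∧ p.1 q'.1 = q'.2) ∧ (p.2 q.1 = q.2 ∧ p.2 q'.1 = q'.2))
          ↔ ((p.1 q.1 = q.2 ∧ p.2 q.1 = q.2) ∧ (p.1 q'.1 = q'.2 ∧ p.2 q'.1 = q'.2)) := by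
        tauto
      simp only [hiff]
      by_cases hA : p.1 q.1 = q.2 ∧ p.2 q.1 = q.2 <;>
        by_cases hB : p.1 q'.1 = q'.2 ∧ p.2 q'.1 = q'.2 <;> simp [hA, hB]
    rw [Finset.sum_congr rfl fun p _ => h1 p, Finset.sum_comm]
    refine Finset.sum_congr rfl fun q _ => ?_
    rw [Finset.sum_comm]
    refine Finset.sum_congr rfl fun q' _ => ?_
    rw [← Finset.card_filter]
    have hsplit : (P.filter fun i => (i.1 q.1 = q.2 ∧ i.1 q'.1 = q'.2)
          ∧ (i.2 q.1 = q.2 ∧ i.2 q'.1 = q'.2))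
        = (F.filter fun α => α q.1 = q.2 ∧ α q'.1 = q'.2)
          ×ˢ (F.filter fun α => α q.1 = q.2 ∧ α q'.1 = q'.2) := by
      ext x
      simp only [Finset.mem_filter, Finset.mem_product, hP]
      tauto
    rw [hsplit, Finset.card_product, sq]
  -- Step E : diagonal of the second moment
  have stepE : ∀ q ∈ E, M q q = N q := fun q _ =>
    congrArg Finset.card (Finset.filter_congr fun α _ => by tauto)
  -- assembling
  set f := F.card with hfdef
  set Sc := (P.filter fun p => ∃ i, p.1 i = p.2 i).card with hScdef
  have hnR : (14 : ℝ) ≤ (n : ℝ) := by exact_mod_cast hn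
  -- counting facts, cast to ℝ
  have hNR : ∀ q ∈ E, ((n : ℝ) - 1) * (N q : ℝ) = (f : ℝ) := by
    intro q hq
    have hlt : q.1 < q.2 := (Finset.mem_filter.1 hq).2
    have := L1 q.1 q.2 hlt.ne'
    have hcast : (((n - 1) * N q : ℕ) : ℝ) = ((f : ℕ) : ℝ) := by exact_mod_cast this
    push_cast [Nat.cast_sub (by omega : 1 ≤ n)] at hcast
    linarith [hcast]
  have hMR : ∀ q ∈ E, ∀ q' ∈ E, q ≠ q' →
      ((n : ℝ) - 1) * (((n : ℝ) - 3) * (M q q' : ℝ)) ≤ (f : ℝ) := by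
    intro q hq q' hq' hne
    have hlt : q.1 < q.2 := (Finset.mem_filter.1 hq).2
    have hlt' : q'.1 < q'.2 := (Finset.mem_filter.1 hq').2
    have := L5 hlt hlt' hne
    have hcast : (((n - 1) * ((n - 3) * M q q') : ℕ) : ℝ) ≤ ((f : ℕ) : ℝ) := by
      exact_mod_cast this
    push_cast [Nat.cast_sub (by omega : 1 ≤ n), Nat.cast_sub (by omega : 3 ≤ n)] at hcast
    linarith [hcast]
  have heR : ((E.card : ℕ) : ℝ) = ((n : ℝ) ^ 2 - n) / 2 := by
    have h := card_E (n := n)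
    have hcast : 2 * ((E.card : ℕ) : ℝ) + (n : ℝ) = (n : ℝ) * (n : ℝ) := by exact_mod_cast h
    nlinarith [hcast]
  -- master inequality (cast of stepB with stepA, stepC, stepD)
  have hZ : 3 * ((∑ p ∈ P, X p : ℕ) : ℤ) - ((∑ p ∈ P, X p ^ 2 : ℕ) : ℤ) ≤ 2 * ((Sc : ℕ) : ℤ) := by
    have h2 : ((Sc : ℕ) : ℤ) = ((P.filter fun p => 1 ≤ X p).card : ℤ) := by
      rw [hScdef, stepA]
    rw [h2]
    calc 3 * ((∑ p ∈ P, X p : ℕ) : ℤ) - ((∑ p ∈ P, X p ^ 2 : ℕ) : ℤ)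
        = ∑ p ∈ P, (3 * (X p : ℤ) - (X p : ℤ) ^ 2) := by
          push_cast
          rw [Finset.sum_sub_distrib, Finset.mul_sum]
      _ ≤ _ := stepB
  have hC : ((∑ p ∈ P, X p : ℕ) : ℝ) = ∑ q ∈ E, (N q : ℝ) ^ 2 := by exact_mod_cast stepC
  have hD : ((∑ p ∈ P, X p ^ 2 : ℕ) : ℝ) = ∑ q ∈ E, ∑ q' ∈ E, (M q q' : ℝ) ^ 2 := by
    exact_mod_cast stepD
  have master : 3 * (∑ q ∈ E, (N q : ℝ) ^ 2) - (∑ q ∈ E, ∑ q' ∈ E, (M q q' : ℝ) ^ 2)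
      ≤ 2 * (Sc : ℝ) := by
    rw [← hC, ← hD]
    exact_mod_cast hZ
  -- abbreviations
  set a : ℝ := (n : ℝ) - 1 with hadef
  set b : ℝ := (n : ℝ) - 3 with hbdef
  have ha : 0 < a := by rw [hadef]; linarith
  have hb : 0 < b := by rw [hbdef]; linarith
  set eR : ℝ := ((E.card : ℕ) : ℝ) with heRdef
  have heRnn : 0 ≤ eR := Nat.cast_nonneg _
  set fR : ℝ := ((f : ℕ) : ℝ) with hfRdef
  have hfRnn : 0 ≤ fR := Nat.cast_nonneg _
  -- T1 identity
  have hT1 : (∑ q ∈ E, (N q : ℝ) ^ 2) * (a ^ 2 * b ^ 2) = eR * (fR ^ 2 * b ^ 2) := by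
    rw [Finset.sum_mul]
    have hterm : ∀ q ∈ E, (N q : ℝ) ^ 2 * (a ^ 2 * b ^ 2) = fR ^ 2 * b ^ 2 :=
      fun q hq => by rw [← hNR q hq]; ring
    rw [Finset.sum_congr rfl hterm, Finset.sum_const, nsmul_eq_mul]
  -- T2 bound
  have hT2 : (∑ q ∈ E, ∑ q' ∈ E, (M q q' : ℝ) ^ 2) * (a ^ 2 * b ^ 2)
      ≤ eR * (fR ^ 2 * b ^ 2) + eR ^ 2 * fR ^ 2 := by
    rw [Finset.sum_mul]
    have hne : ∀ q ∈ E, (∑ q' ∈ E, (M q q' : ℝ) ^ 2) * (a ^ 2 * b ^ 2)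
        ≤ fR ^ 2 * b ^ 2 + eR * fR ^ 2 := by
      intro q hq
      rw [← Finset.add_sum_erase _ _ hq, stepE q hq]
      have hdiag : ((N q : ℝ) ^ 2) * (a ^ 2 * b ^ 2) = fR ^ 2 * b ^ 2 := by
        rw [← hNR q hq]; ring
      have hoff : (∑ q' ∈ E.erase q, (M q q' : ℝ) ^ 2) * (a ^ 2 * b ^ 2) ≤ eR * fR ^ 2 := by
        rw [Finset.sum_mul]
        calc ∑ q' ∈ E.erase q, (M q q' : ℝ) ^ 2 * (a ^ 2 * b ^ 2)
            ≤ ∑ q' ∈ E.erase q, fR ^ 2 := by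
              refine Finset.sum_le_sum fun q' hq' => ?_
              have hq'E : q' ∈ E := Finset.mem_of_mem_erase hq'
              have hqq' : q ≠ q' := fun h => (Finset.ne_of_mem_erase hq') h.symm
              have hle := hMR q hq q' hq'E hqq'
              have hMnn : (0 : ℝ) ≤ (M q q' : ℝ) := Nat.cast_nonneg _
              nlinarith [hle, hMnn, ha, hb, mul_nonneg (mul_nonneg ha.le hb.le) hMnn]
          _ = ((E.erase q).card : ℝ) * fR ^ 2 := by
              rw [Finset.sum_const, nsmul_eq_mul]
          _ ≤ eR * fR ^ 2 := by
              have : ((E.erase q).card : ℝ) ≤ eR := by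
                rw [heRdef]
                exact_mod_cast Finset.card_le_card (Finset.erase_subset _ _)
              nlinarith [sq_nonneg fR, this]
      calc ((N q : ℝ) ^ 2 + ∑ q' ∈ E.erase q, (M q q' : ℝ) ^ 2) * (a ^ 2 * b ^ 2)
          = (N q : ℝ) ^ 2 * (a ^ 2 * b ^ 2)
            + (∑ q' ∈ E.erase q, (M q q' : ℝ) ^ 2) * (a ^ 2 * b ^ 2) := by ring
        _ ≤ fR ^ 2 * b ^ 2 + eR * fR ^ 2 := by rw [hdiag]; linarith [hoff]
    calc ∑ q ∈ E, (∑ q' ∈ E, (M q q' : ℝ) ^ 2) * (a ^ 2 * b ^ 2)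
        ≤ ∑ q ∈ E, (fR ^ 2 * b ^ 2 + eR * fR ^ 2) := Finset.sum_le_sum hne
      _ = eR * (fR ^ 2 * b ^ 2) + eR ^ 2 * fR ^ 2 := by
          rw [Finset.sum_const, nsmul_eq_mul, ← heRdef]
          ring
  -- polynomial inequality
  have hpoly : (2 / 3) * a ^ 2 * b ^ 2 + eR ^ 2 ≤ 2 * eR * b ^ 2 := by
    rw [hadef, hbdef, heR]
    have hcube : 0 ≤ (n : ℝ) ^ 3 - 13 * (n : ℝ) ^ 2 - 12 * (n : ℝ) + 72 := by
      nlinarith [hnR, sq_nonneg ((n : ℝ) - 6)]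
    nlinarith [mul_nonneg (by linarith : (0 : ℝ) ≤ (n : ℝ) - 1) hcube]
  -- combine
  have hcomb : (2 / 3) * (a ^ 2 * b ^ 2) * fR ^ 2 ≤ 2 * (Sc : ℝ) * (a ^ 2 * b ^ 2) := by
    have h1 : (3 * (∑ q ∈ E, (N q : ℝ) ^ 2) - (∑ q ∈ E, ∑ q' ∈ E, (M q q' : ℝ) ^ 2))
        * (a ^ 2 * b ^ 2) ≤ 2 * (Sc : ℝ) * (a ^ 2 * b ^ 2) := by
      have hab : (0 : ℝ) ≤ a ^ 2 * b ^ 2 := by positivity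
      exact mul_le_mul_of_nonneg_right master hab
    have h2 : 2 * eR * (fR ^ 2 * b ^ 2) - eR ^ 2 * fR ^ 2
        ≤ (3 * (∑ q ∈ E, (N q : ℝ) ^ 2) - (∑ q ∈ E, ∑ q' ∈ E, (M q q' : ℝ) ^ 2))
          * (a ^ 2 * b ^ 2) := by
      have : (3 * (∑ q ∈ E, (N q : ℝ) ^ 2) - (∑ q ∈ E, ∑ q' ∈ E, (M q q' : ℝ) ^ 2))
          * (a ^ 2 * b ^ 2)
          = 3 * ((∑ q ∈ E, (N q : ℝ) ^ 2) * (a ^ 2 * b ^ 2))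
            - (∑ q ∈ E, ∑ q' ∈ E, (M q q' : ℝ) ^ 2) * (a ^ 2 * b ^ 2) := by ring
      rw [this, hT1]
      linarith [hT2]
    have h3 : (2 / 3) * (a ^ 2 * b ^ 2) * fR ^ 2
        ≤ 2 * eR * (fR ^ 2 * b ^ 2) - eR ^ 2 * fR ^ 2 := by
      nlinarith [hpoly, sq_nonneg fR]
    exact h3.trans (h2.trans h1)
  have hab : (0 : ℝ) < a ^ 2 * b ^ 2 := by positivity
  have hfinal : (2 / 3) * fR ^ 2 ≤ 2 * (Sc : ℝ) := by
    have := (mul_le_mul_iff_of_pos_right hab).1 (by linarith [hcomb] :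
      ((2 / 3) * fR ^ 2) * (a ^ 2 * b ^ 2) ≤ (2 * (Sc : ℝ)) * (a ^ 2 * b ^ 2))
    exact this
  rw [hfRdef] at hfinal
  linarith [hfinal]
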